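/- arXiv:2502.10069 — 2 statements merged into one kernel-verified Lean document; each statement's English description precedes it below -/
import Mathlib

section
/- Let f : ℝ → ℝ be C¹ with |f'(s)| ≤ α for all s ∈ [min(a,b), max(a,b)]. Then the state u* = (a + b)/2 - (f(a) - f(b))/(2α) satisfies min(a, b) ≤ u* ≤ max(a, b). -/
/-- The Lax–Friedrichs intermediate state between `a` and `b` lies between `a` and `b`
whenever `α` bounds the wave speed `|f'|` on the interval between them. -/
theorem lax_friedrichs_intermediate_state_bounds (f : ℝ → ℝ) (a b α : ℝ)
    (hf : ContDiff ℝ 1 f)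
    (hspeed : ∀ s ∈ Set.uIcc a b, |deriv f s| ≤ α) :
    min a b ≤ (a + b) / 2 - (f a - f b) / (2 * α) ∧
      (a + b) / 2 - (f a - f b) / (2 * α) ≤ max a b := by
  have hα0 : 0 ≤ α := le_trans (abs_nonneg _) (hspeed a Set.left_mem_uIcc)
  have key : |f a - f b| ≤ α * |a - b| := by
    have hconv : Convex ℝ (Set.uIcc a b) := convex_uIcc a b
    have := hconv.norm_image_sub_le_of_norm_deriv_le
      (fun x _ => (hf.differentiable one_ne_zero).differentiableAt)
      (fun x hx => by simpa [Real.norm_eq_abs] using hspeed x hx)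
      Set.right_mem_uIcc Set.left_mem_uIcc
    simpa [Real.norm_eq_abs] using this
  rcases eq_or_lt_of_le hα0 with h0 | hα
  · have hfab : f a - f b = 0 := by
      have := key
      rw [← h0] at this
      simpa using this
    rw [hfab]
    constructor
    · rcases le_total a b with h | h <;> simp [min_eq_left, min_eq_right, h] <;> linarith
    · rcases le_total a b with h | h <;> simp [max_eq_left, max_eq_right, h] <;> linarith
  · have habs := abs_le.mp key
    have hfa := (abs_le.mp (le_refl |f a - f b|)).1
    have h1 : (f a - f b) / (2 * α) ≤ |a - b| / 2 := by
      rw [div_le_div_iff₀ (by positivity) (by norm_num)]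
      nlinarith [le_abs_self (f a - f b)]
    have h2 : -(|a - b| / 2) ≤ (f a - f b) / (2 * α) := by
      rw [neg_le, ← neg_div, div_le_div_iff₀ (by positivity) (by norm_num)]
      nlinarith [neg_abs_le (f a - f b)]
    rcases le_total a b with h | h
    · rw [min_eq_left h, max_eq_right h]
      rw [abs_of_nonpos (by linarith : a - b ≤ 0)] at h1 h2
      constructor <;> linarith
    · rw [min_eq_right h, max_eq_left h]
      rw [abs_of_nonneg (by linarith : 0 ≤ a - b)] at h1 h2
      constructor <;> linarith
end

section
/- Let u* = (ρ*, m*, E*) ∈ ℝ⁴ and Δ = (Δρ, Δm, ΔE) ∈ ℝ⁴, and suppose ρ* > 0 and the internal energy of u* is positive. If θ ∈ [0, min(1, α·ρ*/|Δρ|)] ∩ [0, min(1, α·inf_w (u*·ψ(w))/|Δ·ψ(w)|)] with α > 0, then the state u* - (θ/α)Δ has nonnegative density and nonnegative internal energy. -/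
/-- The GQL constraint functional `u ↦ u·ψ(w)` with `ψ(w) = (|w|²/2, -w, 1)`,
for a state `u = (ρ, m₁, m₂, E)` and `w = (w₁, w₂)`. -/
noncomputable def psiDot (u : ℝ × ℝ × ℝ × ℝ) (w : ℝ × ℝ) : ℝ :=
  u.1 * ((w.1 ^ 2 + w.2 ^ 2) / 2) - u.2.1 * w.1 - u.2.2.1 * w.2 + u.2.2.2

/-- Combined density/internal-energy limiter: if `u* = (ρ*, m*, E*)` has positive
density and internal energy and `θ` respects both the density and the GQL energy
constraints (with the convention that vanishing denominators impose no constraint),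
then `u* - (θ/α)Δ` has nonnegative density and nonnegative internal energy. -/
theorem gql_density_energy_limiter (u Δ : ℝ × ℝ × ℝ × ℝ) (α θ : ℝ) (hα : 0 < α)
    (hρ : 0 < u.1)
    (he : 0 < u.2.2.2 - (u.2.1 ^ 2 + u.2.2.1 ^ 2) / (2 * u.1))
    (hθ0 : 0 ≤ θ) (hθ1 : θ ≤ 1)
    (hθρ : Δ.1 ≠ 0 → θ ≤ min 1 (α * u.1 / |Δ.1|))
    (hθe : ∀ w : ℝ × ℝ, psiDot Δ w ≠ 0 → θ ≤ min 1 (α * psiDot u w / |psiDot Δ w|)) :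
    0 ≤ (u - (θ / α) • Δ).1 ∧ ∀ w : ℝ × ℝ, 0 ≤ psiDot (u - (θ / α) • Δ) w := by
  have hc0 : 0 ≤ θ / α := div_nonneg hθ0 hα.le
  have hupos : ∀ w : ℝ × ℝ, 0 < psiDot u w := by
    intro w
    have h2 : 0 < 2 * u.1 := by linarith
    have he' : (u.2.1 ^ 2 + u.2.2.1 ^ 2) < u.2.2.2 * (2 * u.1) := by
      have := (div_lt_iff₀ h2).mp (by linarith : (u.2.1 ^ 2 + u.2.2.1 ^ 2) / (2 * u.1) < u.2.2.2)
      linarith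
    have key : 0 < psiDot u w * (2 * u.1) := by
      have h1 : (u.1 * w.1 - u.2.1) ^ 2 ≥ 0 := sq_nonneg _
      have h2' : (u.1 * w.2 - u.2.2.1) ^ 2 ≥ 0 := sq_nonneg _
      simp only [psiDot]
      nlinarith [sq_nonneg (u.1 * w.1 - u.2.1), sq_nonneg (u.1 * w.2 - u.2.2.1)]
    nlinarith [key, h2]
  constructor
  · simp only [Prod.fst_sub, Prod.smul_fst, smul_eq_mul]
    by_cases hΔ : Δ.1 = 0
    · simp [hΔ]; positivity
    · have h := (hθρ hΔ).trans (min_le_right _ _) |>.trans (le_refl _)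
      have habs : 0 < |Δ.1| := abs_pos.mpr hΔ
      have h2 : θ * |Δ.1| ≤ α * u.1 := by
        have := (le_div_iff₀ habs).mp ((hθρ hΔ).trans (min_le_right _ _))
        linarith
      have h3 : θ / α * Δ.1 ≤ θ / α * |Δ.1| := by
        apply mul_le_mul_of_nonneg_left (le_abs_self _) hc0
      have h4 : θ / α * |Δ.1| ≤ u.1 := by
        rw [div_mul_eq_mul_div, div_le_iff₀ hα]
        linarith [h2]
      linarith
  · intro w
    have hlin : psiDot (u - (θ / α) • Δ) w = psiDot u w - (θ / α) * psiDot Δ w := by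
      simp only [psiDot, Prod.fst_sub, Prod.snd_sub, Prod.smul_fst, Prod.smul_snd,
        smul_eq_mul]
      ring
    rw [hlin]
    by_cases hΔ : psiDot Δ w = 0
    · simp [hΔ]; exact (hupos w).le
    · have habs : 0 < |psiDot Δ w| := abs_pos.mpr hΔ
      have h2 : θ * |psiDot Δ w| ≤ α * psiDot u w := by
        have := (le_div_iff₀ habs).mp ((hθe w hΔ).trans (min_le_right _ _))
        linarith
      have h3 : θ / α * psiDot Δ w ≤ θ / α * |psiDot Δ w| := by
        apply mul_le_mul_of_nonneg_left (le_abs_self _) hc0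
      have h4 : θ / α * |psiDot Δ w| ≤ psiDot u w := by
        rw [div_mul_eq_mul_div, div_le_iff₀ hα]
        linarith [h2]
      linarith
end
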